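/- Chung-Feller theorem: For each e with 0 ≤ e ≤ k, the number of bitstrings of length 2k with exactly k ones having exactly e flaws equals the Catalan number C_k, independently of e. -/

import Mathlib

/-- The number of flaws of a bitstring: the number of prefixes ending with a zero (`false`)
that contain strictly fewer ones than zeros. -/
def flaws (l : List Bool) : ℕ :=
  ((Finset.range l.length).filter fun m =>
    l.getD m true = false ∧ (l.take (m + 1)).count true < (l.take (m + 1)).count false).card

namespace CF

lemma take_succ_getElem (l : List Bool) (n : ℕ) (h : n < l.length) :
    l.take (n+1) = l.take n ++ [l[n]] := by
  rw [List.take_succ]; simp [List.getElem?_eq_getElem h]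

lemma ctcf (l : List Bool) : l.count true + l.count false = l.length :=
  List.count_true_add_count_false l

/-- generic snoc lemma for prefix-determined position counts -/
lemma card_filter_snoc (P : List Bool → Bool → Prop) [∀ l b, Decidable (P l b)]
    (l : List Bool) (x : Bool) :
    ((Finset.range (l ++ [x]).length).filter fun m =>
      P ((l ++ [x]).take (m+1)) ((l ++ [x]).getD m true)).card
    = ((Finset.range l.length).filter fun m => P (l.take (m+1)) (l.getD m true)).card
      + (if P (l ++ [x]) x then 1 else 0) := by
  have hlen : (l ++ [x]).length = l.length + 1 := by simp
  rw [hlen, Finset.range_add_one, Finset.filter_insert]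
  have hcong : ∀ m ∈ Finset.range l.length,
      (P ((l ++ [x]).take (m+1)) ((l ++ [x]).getD m true)) ↔
      (P (l.take (m+1)) (l.getD m true)) := by
    intro m hm
    rw [Finset.mem_range] at hm
    rw [List.take_append_of_le_length (by omega)]
    have h1 : (l ++ [x]).getD m true = l.getD m true := by
      rw [List.getD_eq_getElem _ true (by simp; omega), List.getD_eq_getElem l true hm]
      exact List.getElem_append_left hm
    rw [h1]
  rw [Finset.filter_congr hcong]
  have h2 : (l ++ [x]).take (l.length + 1) = l ++ [x] := by
    apply List.take_of_length_le; simp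
  have h3 : (l ++ [x]).getD l.length true = x := by
    rw [List.getD_eq_getElem _ true (by simp)]
    simp
  rw [h2, h3]
  split_ifs with h
  · rw [Finset.card_insert_of_notMem (by simp)]
  · rfl

lemma flaws_snoc (l : List Bool) (x : Bool) :
    flaws (l ++ [x]) = flaws l +
      (if x = false ∧ (l ++ [x]).count true < (l ++ [x]).count false then 1 else 0) := by
  have := card_filter_snoc (fun q b => b = false ∧ q.count true < q.count false) l x
  simpa [flaws] using this

lemma count_false_eq_card (l : List Bool) :
    l.count false = ((Finset.range l.length).filter fun m => l.getD m true = false).card := by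
  induction l using List.reverseRecOn with
  | nil => simp [flaws]
  | append_singleton l x ih =>
    have := card_filter_snoc (fun _ b => b = false) l x
    rw [this, ← ih, List.count_append]
    cases x <;> simp

lemma flaws_le_count_false (l : List Bool) : flaws l ≤ l.count false := by
  rw [count_false_eq_card, flaws]
  apply Finset.card_le_card
  intro m hm
  rw [Finset.mem_filter] at hm ⊢
  exact ⟨hm.1, hm.2.1⟩

lemma flaws_append_bal (c b : List Bool) (hc : c.count true = c.count false) :
    flaws (c ++ b) = flaws c + flaws b := by
  induction b using List.reverseRecOn with
  | nil => simp [flaws]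
  | append_singleton b x ih =>
    rw [← List.append_assoc, flaws_snoc, ih, flaws_snoc]
    have h1 : (c ++ b ++ [x]).count true = c.count true + (b ++ [x]).count true := by
      simp [List.count_append]
    have h2 : (c ++ b ++ [x]).count false = c.count false + (b ++ [x]).count false := by
      simp [List.count_append]
    have : (x = false ∧ (c ++ b ++ [x]).count true < (c ++ b ++ [x]).count false) ↔
        (x = false ∧ (b ++ [x]).count true < (b ++ [x]).count false) := by
      rw [h1, h2]; constructor <;> rintro ⟨rfl, h⟩ <;> exact ⟨rfl, by omega⟩
    rw [if_congr this rfl rfl]; omega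

/-- nonnegative (Dyck-like) lists have no flaws -/
lemma flaws_eq_zero (l : List Bool)
    (h : ∀ m, (l.take m).count false ≤ (l.take m).count true) : flaws l = 0 := by
  rw [flaws, Finset.card_eq_zero, Finset.filter_eq_empty_iff]
  intro m _
  intro hcon
  exact absurd (h (m+1)) (by omega)

/-- nonpositive lists have all zeros as flaws -/
lemma flaws_eq_count_false (l : List Bool)
    (h : ∀ m, (l.take m).count true ≤ (l.take m).count false) :
    flaws l = l.count false := by
  rw [flaws, count_false_eq_card]
  congr 1
  apply Finset.filter_congr
  intro m hm
  rw [Finset.mem_range] at hm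
  simp only [and_iff_left_iff_imp]
  intro hf
  have ht := take_succ_getElem l m hm
  have hgd := List.getD_eq_getElem l true hm
  rw [hgd] at hf
  have h1 : (l.take (m+1)).count true = (l.take m).count true := by
    rw [ht, List.count_append, hf]; simp
  have h2 : (l.take (m+1)).count false = (l.take m).count false + 1 := by
    rw [ht, List.count_append, hf]; simp
  have := h m
  omega


lemma np_of_flaws_eq (l : List Bool) (hb : l.count true = l.count false)
    (hf : flaws l = l.count false) :
    ∀ m, (l.take m).count true ≤ (l.take m).count false := by
  classical
  have hsub1 : (Finset.range l.length).filter (fun m =>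
      l.getD m true = false ∧ (l.take (m + 1)).count true < (l.take (m + 1)).count false)
      ⊆ (Finset.range l.length).filter (fun m => l.getD m true = false) := by
    intro m hm
    rw [Finset.mem_filter] at hm ⊢
    exact ⟨hm.1, hm.2.1⟩
  have hcard : ((Finset.range l.length).filter (fun m => l.getD m true = false)).card ≤
      ((Finset.range l.length).filter (fun m =>
      l.getD m true = false ∧ (l.take (m + 1)).count true < (l.take (m + 1)).count false)).card := by
    rw [← count_false_eq_card]
    rw [flaws] at hf
    omega
  have hsubEq := Finset.eq_of_subset_of_card_le hsub1 hcard
  have hAll : ∀ m, m < l.length → l.getD m true = false →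
      (l.take (m + 1)).count true < (l.take (m + 1)).count false := by
    intro m hm hgd
    have hmem : m ∈ (Finset.range l.length).filter (fun m => l.getD m true = false) :=
      Finset.mem_filter.mpr ⟨Finset.mem_range.mpr hm, hgd⟩
    rw [← hsubEq, Finset.mem_filter] at hmem
    exact hmem.2.2
  by_contra hcon
  push_neg at hcon
  have hex : ∃ m, (l.take m).count false < (l.take m).count true := hcon
  set m₀ := Nat.find hex with hm₀def
  have hm₀ : (l.take m₀).count false < (l.take m₀).count true := Nat.find_spec hex
  have hmin : ∀ m, m < m₀ → (l.take m).count true ≤ (l.take m).count false := by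
    intro m hm
    have := Nat.find_min hex hm
    omega
  have hm₀len : m₀ < l.length := by
    rcases lt_or_ge m₀ l.length with h | h
    · exact h
    · rw [List.take_of_length_le h] at hm₀; omega
  have hm₀pos : 0 < m₀ := by
    rcases Nat.eq_zero_or_pos m₀ with h | h
    · rw [h] at hm₀; simp at hm₀
    · exact h
  set m' := m₀ - 1 with hm'def
  have hm'1 : m' + 1 = m₀ := by omega
  have hm'len : m' < l.length := by omega
  have htk := take_succ_getElem l m' hm'len
  rw [← hm'1] at hm₀
  have hminm' := hmin m' (by omega)
  have hcharm' : l[m'] = true := by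
    rcases Bool.eq_false_or_eq_true l[m'] with h | h
    · exact h
    · rw [htk, List.count_append, h] at hm₀; simp at hm₀; omega
  have hstep : (l.take (m' + 1)).count true = (l.take (m' + 1)).count false + 1 := by
    rw [htk, List.count_append, List.count_append, hcharm'] at hm₀ ⊢
    simp at hm₀ ⊢
    omega
  -- second find
  have hex2 : ∃ m, m' + 1 < m ∧ (l.take m).count true ≤ (l.take m).count false := by
    refine ⟨l.length, by omega, by rw [List.take_length]; omega⟩
  set m₁ := Nat.find hex2 with hm₁def
  have hm₁ : m' + 1 < m₁ ∧ (l.take m₁).count true ≤ (l.take m₁).count false := Nat.find_spec hex2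
  have hm₁len : m₁ ≤ l.length := Nat.find_min' hex2 ⟨by omega, by rw [List.take_length]; omega⟩
  set m'' := m₁ - 1 with hm''def
  have hm''1 : m'' + 1 = m₁ := by omega
  have hm''len : m'' < l.length := by omega
  have hge : m' + 1 ≤ m'' := by omega
  have hpos'' : (l.take m'').count false < (l.take m'').count true := by
    rcases Nat.eq_or_lt_of_le hge with h2 | h2
    · rw [← h2]; omega
    · have := Nat.find_min hex2 (show m'' < m₁ by omega)
      push_neg at this
      have := this (by omega)
      omega
  have htk2 := take_succ_getElem l m'' hm''len
  rw [← hm''1] at hm₁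
  have hchar'' : l[m''] = false := by
    rcases Bool.eq_false_or_eq_true l[m''] with h | h
    · exfalso; rw [htk2, List.count_append, h] at hm₁
      have := hm₁.2; simp at this; omega
    · exact h
  have h5 := hAll m'' hm''len (by rw [List.getD_eq_getElem l true hm''len]; exact hchar'')
  rw [htk2, List.count_append, List.count_append, hchar''] at hm₁ h5
  simp at hm₁ h5
  omega
lemma pos_of_min (l : List Bool) (n : ℕ) (hn : n ≤ l.length)
    (hhead : l.getD 0 true = true)
    (hmin : ∀ m, 0 < m → m < n → (l.take m).count true ≠ (l.take m).count false) :
    ∀ m, 0 < m → m < n → (l.take m).count false < (l.take m).count true := by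
  intro m
  induction m with
  | zero => omega
  | succ m ih =>
    intro _ hmn
    have hmlen : m < l.length := by omega
    have ht := take_succ_getElem l m hmlen
    rcases Nat.eq_zero_or_pos m with rfl | hm
    · have h0 : l[0] = true := by rw [← List.getD_eq_getElem l true hmlen]; exact hhead
      rw [ht, h0]; simp
    · have ihm := ih hm (by omega)
      have hne := hmin (m+1) (by omega) hmn
      cases hc : l[m] <;> rw [hc] at ht <;>
        rw [ht, List.count_append] at hne ⊢ <;> simp at hne ⊢ <;> omega

lemma neg_of_min (l : List Bool) (n : ℕ) (hn : n ≤ l.length)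
    (hhead : l.getD 0 true = false)
    (hmin : ∀ m, 0 < m → m < n → (l.take m).count true ≠ (l.take m).count false) :
    ∀ m, 0 < m → m < n → (l.take m).count true < (l.take m).count false := by
  intro m
  induction m with
  | zero => omega
  | succ m ih =>
    intro _ hmn
    have hmlen : m < l.length := by omega
    have ht := take_succ_getElem l m hmlen
    rcases Nat.eq_zero_or_pos m with rfl | hm
    · have h0 : l[0] = false := by rw [← List.getD_eq_getElem l true hmlen]; exact hhead
      rw [ht, h0]; simp
    · have ihm := ih hm (by omega)
      have hne := hmin (m+1) (by omega) hmn
      cases hc : l[m] <;> rw [hc] at ht <;>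
        rw [ht, List.count_append] at hne ⊢ <;> simp at hne ⊢ <;> omega

def allB (n : ℕ) : Finset (List Bool) := (Finset.univ : Finset (Fin n → Bool)).image List.ofFn

lemma mem_allB {n : ℕ} {l : List Bool} : l ∈ allB n ↔ l.length = n := by
  simp only [allB, Finset.mem_image, Finset.mem_univ, true_and]
  constructor
  · rintro ⟨f, rfl⟩; simp
  · rintro rfl; exact ⟨l.get, List.ofFn_get l⟩

def T (k e : ℕ) : Finset (List Bool) :=
  (allB (2*k)).filter fun l => l.count true = k ∧ flaws l = e

lemma mem_T {k e : ℕ} {l : List Bool} :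
    l ∈ T k e ↔ l.length = 2*k ∧ l.count true = k ∧ flaws l = e := by
  simp [T, mem_allB, Finset.mem_filter, and_assoc]

lemma count_false_of_mem {k e : ℕ} {l : List Bool} (h : l ∈ T k e) : l.count false = k := by
  rw [mem_T] at h; have := ctcf l; omega

lemma T_empty {k e : ℕ} (h : k < e) : T k e = ∅ := by
  rw [Finset.eq_empty_iff_forall_notMem]
  intro l hl
  have h1 := count_false_of_mem hl
  have h2 := flaws_le_count_false l
  rw [mem_T] at hl
  omega
lemma not_flaw_of_flaws_eq_zero {a : List Bool} (h : flaws a = 0) {m : ℕ} (hm : m < a.length) :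
    ¬(a.getD m true = false ∧ (a.take (m+1)).count true < (a.take (m+1)).count false) := by
  rw [flaws, Finset.card_eq_zero, Finset.filter_eq_empty_iff] at h
  exact h (Finset.mem_range.mpr hm)

lemma flaws_ne_zero_of_flaw {a : List Bool} {m : ℕ} (hm : m < a.length)
    (h : a.getD m true = false ∧ (a.take (m+1)).count true < (a.take (m+1)).count false) :
    flaws a ≠ 0 := fun h0 => not_flaw_of_flaws_eq_zero h0 hm h

lemma memA {j r e : ℕ} {a b : List Bool} (ha : a ∈ T j 0) (hb : b ∈ T r e) :
    (true :: a ++ false :: b) ∈ T (j + r + 1) e := by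
  have hfa := count_false_of_mem ha
  have hfb := count_false_of_mem hb
  rw [mem_T] at ha hb ⊢
  obtain ⟨hal, hat, haf⟩ := ha
  obtain ⟨hbl, hbt, hbf⟩ := hb
  have hsplit : true :: a ++ false :: b = (true :: a ++ [false]) ++ b := by simp
  have hcc : (true :: a ++ [false]).count true = (true :: a ++ [false]).count false := by
    simp [List.count_append, List.count_cons]; omega
  refine ⟨by simp; omega, by simp [List.count_append, List.count_cons]; omega, ?_⟩
  rw [hsplit, flaws_append_bal _ _ hcc, hbf]
  have hc0 : flaws (true :: a ++ [false]) = 0 := by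
    rw [flaws, Finset.card_eq_zero, Finset.filter_eq_empty_iff]
    intro m hmr
    rw [Finset.mem_range] at hmr
    have hclen : (true :: a ++ [false]).length = 2*j + 2 := by simp; omega
    rw [hclen] at hmr
    rintro ⟨hgd, hlt⟩
    rcases Nat.eq_zero_or_pos m with rfl | hmpos
    · simp at hgd
    rcases Nat.lt_or_ge m (2*j+1) with hmlt | hmge
    · -- 1 ≤ m ≤ 2j : corresponds to position m-1 of a
      obtain ⟨i, rfl⟩ : ∃ i, m = i + 1 := ⟨m - 1, by omega⟩
      have hi : i < a.length := by omega
      have htake : (true :: a ++ [false]).take (i+1+1) = true :: a.take (i+1) := by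
        rw [List.cons_append, List.take_succ_cons]
        congr 1
        rw [List.take_append_of_le_length (by omega)]
      have hgd2 : a.getD i true = false := by
        simp only [List.cons_append, List.getD_cons_succ] at hgd
        rw [List.getD_append a [false] true i hi] at hgd
        exact hgd
      have hflaw : (a.take (i+1)).count true < (a.take (i+1)).count false := by
        rw [htake] at hlt
        rw [List.count_cons, List.count_cons] at hlt
        simp at hlt
        omega
      exact flaws_ne_zero_of_flaw hi ⟨hgd2, hflaw⟩ haf
    · -- m = 2j+1 : whole list
      have hm2 : m = 2*j + 1 := by omega
      have htake : (true :: a ++ [false]).take (m+1) = true :: a ++ [false] := by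
        apply List.take_of_length_le; simp; omega
      rw [htake] at hlt
      rw [hcc] at hlt
      omega
  omega
lemma memB {j r e' : ℕ} {a b : List Bool} (ha : a ∈ T j j) (hb : b ∈ T r e') :
    (false :: a ++ true :: b) ∈ T (j + r + 1) (j + 1 + e') := by
  have hfa := count_false_of_mem ha
  have hfb := count_false_of_mem hb
  rw [mem_T] at ha hb ⊢
  obtain ⟨hal, hat, haf⟩ := ha
  obtain ⟨hbl, hbt, hbf⟩ := hb
  have hnp := np_of_flaws_eq a (by omega) (by omega)
  have hsplit : false :: a ++ true :: b = (false :: a ++ [true]) ++ b := by simp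
  have hcc : (false :: a ++ [true]).count true = (false :: a ++ [true]).count false := by
    simp [List.count_append, List.count_cons]; omega
  refine ⟨by simp; omega, by simp [List.count_append, List.count_cons]; omega, ?_⟩
  rw [hsplit, flaws_append_bal _ _ hcc, hbf]
  have hnpc : ∀ m, ((false :: a ++ [true]).take m).count true ≤
      ((false :: a ++ [true]).take m).count false := by
    intro m
    rcases Nat.eq_zero_or_pos m with rfl | hm
    · simp
    rcases Nat.lt_or_ge m (2*j+2) with hlt | hge
    · obtain ⟨i, rfl⟩ : ∃ i, m = i + 1 := ⟨m-1, by omega⟩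
      have htk : (false :: a ++ [true]).take (i+1) = false :: (a.take i) := by
        rw [List.cons_append, List.take_succ_cons]
        congr 1
        rw [List.take_append_of_le_length (by omega)]
      rw [htk]
      have := hnp i
      simp [List.count_cons]
      omega
    · rw [List.take_of_length_le (by simp; omega)]
      exact le_of_eq hcc
  have hc : flaws (false :: a ++ [true]) = j + 1 := by
    rw [flaws_eq_count_false _ hnpc]
    simp [List.count_append, List.count_cons]
    omega
  omega
lemma decompose {k e : ℕ} {l : List Bool} (hl : l ∈ T (k+1) e) :
    ∃ j, j ≤ k ∧ ∃ a b : List Bool,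
      (l = true :: a ++ false :: b ∧ a ∈ T j 0 ∧ b ∈ T (k-j) e) ∨
      (l = false :: a ++ true :: b ∧ a ∈ T j j ∧ j + 1 ≤ e ∧ b ∈ T (k-j) (e-1-j)) := by
  have hcf := count_false_of_mem hl
  rw [mem_T] at hl
  obtain ⟨hlen, hct, hfl⟩ := hl
  have hex : ∃ t, 0 < t ∧ (l.take (2*t)).count true = (l.take (2*t)).count false :=
    ⟨k+1, by omega, by rw [List.take_of_length_le (by omega)]; omega⟩
  set t₀ := Nat.find hex with ht₀def
  have hspec : 0 < t₀ ∧ (l.take (2*t₀)).count true = (l.take (2*t₀)).count false :=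
    Nat.find_spec hex
  have ht₀le : t₀ ≤ k + 1 := Nat.find_min' hex
    ⟨by omega, by rw [List.take_of_length_le (by omega)]; omega⟩
  have h2t : 2*t₀ ≤ l.length := by omega
  have hmin : ∀ m, 0 < m → m < 2*t₀ →
      (l.take m).count true ≠ (l.take m).count false := by
    intro m hm0 hmlt heq
    have hlt : (l.take m).length = m := by rw [List.length_take]; omega
    have hsum := ctcf (l.take m)
    have hev : m = 2 * (l.take m).count true := by omega
    have hs : (l.take m).count true < t₀ := by omega
    have := Nat.find_min hex hs
    push_neg at this
    rw [← hev] at this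
    exact absurd heq (this (by omega))
  set j := t₀ - 1 with hjdef
  have hjk : j ≤ k := by omega
  -- basic structure
  obtain ⟨x, l', rfl⟩ : ∃ x l', l = x :: l' := by
    cases l with
    | nil => simp at hlen
    | cons x l' => exact ⟨x, l', rfl⟩
  have hl'len : l'.length = 2*k + 1 := by simp at hlen; omega
  have h2jlen : 2*j < l'.length := by omega
  -- the char at position 2*t₀ - 1 = 2*j+1 of l, i.e. position 2*j of l'
  have hdrop : l'.drop (2*j) = l'[2*j] :: l'.drop (2*j+1) := List.drop_eq_getElem_cons h2jlen
  have hstruct : x :: l' = x :: (l'.take (2*j) ++ l'[2*j] :: l'.drop (2*j+1)) := by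
    rw [← hdrop, List.take_append_drop]
  have htk1 : (x :: l').take (2*t₀) = x :: l'.take (2*j+1) := by
    have : 2*t₀ = (2*j+1) + 1 := by omega
    rw [this, List.take_succ_cons]
  have htk2 : l'.take (2*j+1) = l'.take (2*j) ++ [l'[2*j]] := take_succ_getElem l' (2*j) h2jlen
  have hclen : ((x :: l').take (2*t₀)).length = 2*t₀ := by
    rw [List.length_take]; omega
  have hcsum := ctcf ((x :: l').take (2*t₀))
  have hctt : ((x :: l').take (2*t₀)).count true = t₀ := by omega
  have hctf : ((x :: l').take (2*t₀)).count false = t₀ := by omega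
  -- b facts
  set b := l'.drop (2*j+1) with hbdef
  have hblen : b.length = 2*(k-j) := by rw [hbdef, List.length_drop]; omega
  have hbdrop : (x :: l').drop (2*t₀) = b := by
    have : 2*t₀ = (2*j+1) + 1 := by omega
    rw [this, List.drop_succ_cons, hbdef]
  have hsplitl : x :: l' = (x :: l').take (2*t₀) ++ b := by
    rw [← hbdrop, List.take_append_drop]
  have hbt : b.count true = k - j := by
    have h1 : (x :: l').count true = ((x :: l').take (2*t₀)).count true + b.count true := by
      conv_lhs => rw [hsplitl]
      rw [List.count_append]
    omega
  have hflsplit : flaws (x :: l') = flaws ((x :: l').take (2*t₀)) + flaws b := by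
    conv_lhs => rw [hsplitl]
    exact flaws_append_bal _ _ hspec.2
  -- head char
  have hheadx : ((x :: l').getD 0 true) = x := rfl
  refine ⟨j, hjk, l'.take (2*j), b, ?_⟩
  cases x with
  | true =>
    left
    have hpos := pos_of_min (true :: l') (2*t₀) h2t hheadx hmin
    -- a count facts
    have hx2 : l'[2*j] = false := by
      rcases Bool.eq_false_or_eq_true l'[2*j] with h | h
      · exfalso
        have hp := hpos (2*j+1) (by omega) (by omega)
        have htq : (true :: l').take (2*j+1) = true :: l'.take (2*j) := List.take_succ_cons
        rw [htk1, htk2, h] at hctt hctf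
        rw [htq] at hp
        simp [List.count_append, List.count_cons] at hctt hctf hp
        omega
      · exact h
    have hat : (l'.take (2*j)).count true = j := by
      rw [htk1, htk2, hx2] at hctt
      simp [List.count_append, List.count_cons] at hctt
      omega
    have hal : (l'.take (2*j)).length = 2*j := by rw [List.length_take]; omega
    have haf : flaws (l'.take (2*j)) = 0 := by
      apply flaws_eq_zero
      intro m
      rcases Nat.lt_or_ge m (2*j) with hm | hm
      · have htt : (l'.take (2*j)).take m = l'.take m := by
          rw [List.take_take]; congr 1; omega
        have hp := hpos (m+1) (by omega) (by omega)
        have htq : (true :: l').take (m+1) = true :: l'.take m := List.take_succ_cons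
        rw [htq] at hp
        rw [htt]
        simp [List.count_cons] at hp
        omega
      · rw [List.take_of_length_le (by omega)]
        have hsum2 := ctcf (l'.take (2*j))
        omega
    have hcflaws : flaws ((true :: l').take (2*t₀)) = 0 := by
      apply flaws_eq_zero
      intro m
      rcases Nat.eq_zero_or_pos m with rfl | hm0
      · simp
      rcases Nat.lt_or_ge m (2*t₀) with hm | hm
      · have htt : ((true :: l').take (2*t₀)).take m = (true :: l').take m := by
          rw [List.take_take]; congr 1; omega
        have hp := hpos m hm0 hm
        rw [htt]
        omega
      · rw [List.take_of_length_le (by omega)]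
        omega
    refine ⟨by rw [← hx2]; exact hstruct, mem_T.mpr ⟨hal, hat, haf⟩,
      mem_T.mpr ⟨hblen, hbt, by omega⟩⟩
  | false =>
    right
    have hneg := neg_of_min (false :: l') (2*t₀) h2t hheadx hmin
    have hx2 : l'[2*j] = true := by
      rcases Bool.eq_false_or_eq_true l'[2*j] with h | h
      · exact h
      · exfalso
        have hp := hneg (2*j+1) (by omega) (by omega)
        have htq : (false :: l').take (2*j+1) = false :: l'.take (2*j) := List.take_succ_cons
        rw [htk1, htk2, h] at hctt hctf
        rw [htq] at hp
        simp [List.count_append, List.count_cons] at hctt hctf hp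
        omega
    have hat : (l'.take (2*j)).count true = j := by
      rw [htk1, htk2, hx2] at hctt
      simp [List.count_append, List.count_cons] at hctt
      omega
    have hal : (l'.take (2*j)).length = 2*j := by rw [List.length_take]; omega
    have hanp : ∀ m, ((l'.take (2*j)).take m).count true ≤
        ((l'.take (2*j)).take m).count false := by
      intro m
      rcases Nat.lt_or_ge m (2*j) with hm | hm
      · have htt : (l'.take (2*j)).take m = l'.take m := by
          rw [List.take_take]; congr 1; omega
        rcases Nat.eq_zero_or_pos m with rfl | hm0
        · simp
        have hp := hneg (m+1) (by omega) (by omega)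
        have htq : (false :: l').take (m+1) = false :: l'.take m := List.take_succ_cons
        rw [htq] at hp
        rw [htt]
        simp [List.count_cons] at hp
        omega
      · rw [List.take_of_length_le (by omega)]
        have hsum2 := ctcf (l'.take (2*j))
        omega
    have haf : flaws (l'.take (2*j)) = j := by
      rw [flaws_eq_count_false _ hanp]
      have hsum2 := ctcf (l'.take (2*j))
      omega
    have hcnp : ∀ m, (((false :: l').take (2*t₀)).take m).count true ≤
        (((false :: l').take (2*t₀)).take m).count false := by
      intro m
      rcases Nat.eq_zero_or_pos m with rfl | hm0
      · simp
      rcases Nat.lt_or_ge m (2*t₀) with hm | hm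
      · have htt : ((false :: l').take (2*t₀)).take m = (false :: l').take m := by
          rw [List.take_take]; congr 1; omega
        have hp := hneg m hm0 hm
        rw [htt]
        omega
      · rw [List.take_of_length_le (by omega)]
        omega
    have hcflaws : flaws ((false :: l').take (2*t₀)) = t₀ := by
      rw [flaws_eq_count_false _ hcnp, hctf]
    have hje : j + 1 ≤ e := by omega
    refine ⟨by rw [← hx2]; exact hstruct, mem_T.mpr ⟨hal, hat, haf⟩, hje,
      mem_T.mpr ⟨hblen, hbt, by omega⟩⟩
lemma eq_extract {a b a' b' : List Bool} {x y : Bool} (h : a ++ x :: b = a' ++ y :: b')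
    (hlen : a.length < a'.length) : a'.take a.length = a ∧ a'.getD a.length true = x := by
  constructor
  · have h2 := congrArg (List.take a.length) h
    rw [List.take_append_of_le_length (le_refl _), List.take_length,
      List.take_append_of_le_length (le_of_lt hlen)] at h2
    exact h2.symm
  · have h2 := congrArg (fun t : List Bool => t.getD a.length true) h
    rw [List.getD_eq_getElem _ true (by simp), List.getD_eq_getElem _ true (by simp; omega),
      List.getElem_append_right (le_refl _), List.getElem_append_left hlen] at h2
    · simp at h2
      rw [List.getD_eq_getElem _ true hlen]
      exact h2.symm

lemma disjA {j j' r r' e e' : ℕ} {a b a' b' : List Bool} (hj : j < j')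
    (ha : a ∈ T j 0) (ha' : a' ∈ T j' 0) (hb : b ∈ T r e) (hb' : b' ∈ T r' e')
    (heq : true :: a ++ false :: b = true :: a' ++ false :: b') : False := by
  have hfa := count_false_of_mem ha
  have hfa' := count_false_of_mem ha'
  have hta := (mem_T.mp ha).2.1
  have hla := (mem_T.mp ha).1
  have hla' := (mem_T.mp ha').1
  have hfl' := (mem_T.mp ha').2.2
  simp only [List.cons_append, List.cons.injEq, true_and] at heq
  have hlen : a.length < a'.length := by omega
  obtain ⟨htk, hgd⟩ := eq_extract heq hlen
  have h2j : a.length < a'.length := hlen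
  have htk1 : a'.take (a.length + 1) = a ++ [false] := by
    rw [take_succ_getElem a' a.length hlen, htk, ← List.getD_eq_getElem a' true hlen, hgd]
  apply flaws_ne_zero_of_flaw hlen ?_ hfl'
  refine ⟨hgd, ?_⟩
  rw [htk1, List.count_append, List.count_append]
  simp
  omega

lemma disjB {j j' r r' e e' : ℕ} {a b a' b' : List Bool} (hj : j < j')
    (ha : a ∈ T j j) (ha' : a' ∈ T j' j') (hb : b ∈ T r e) (hb' : b' ∈ T r' e')
    (heq : false :: a ++ true :: b = false :: a' ++ true :: b') : False := by
  have hfa := count_false_of_mem ha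
  have hfa' := count_false_of_mem ha'
  have hta := (mem_T.mp ha).2.1
  have hla := (mem_T.mp ha).1
  have hla' := (mem_T.mp ha').1
  have hta' := (mem_T.mp ha').2.1
  have hfl' := (mem_T.mp ha').2.2
  have hnp := np_of_flaws_eq a' (by omega) (by omega)
  simp only [List.cons_append, List.cons.injEq, true_and] at heq
  have hlen : a.length < a'.length := by omega
  obtain ⟨htk, hgd⟩ := eq_extract heq hlen
  have htk1 : a'.take (a.length + 1) = a ++ [true] := by
    rw [take_succ_getElem a' a.length hlen, htk, ← List.getD_eq_getElem a' true hlen, hgd]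
  have := hnp (a.length + 1)
  rw [htk1, List.count_append, List.count_append] at this
  simp at this
  omega

lemma decomp_eq (k e : ℕ) :
    T (k+1) e = (Finset.range (k+1)).biUnion (fun j =>
      ((T j 0 ×ˢ T (k-j) e).image fun p => true :: p.1 ++ false :: p.2) ∪
      (if j + 1 ≤ e then
        ((T j j ×ˢ T (k-j) (e-1-j)).image fun p => false :: p.1 ++ true :: p.2)
       else ∅)) := by
  ext l
  simp only [Finset.mem_biUnion, Finset.mem_range, Finset.mem_union]
  constructor
  · intro hl
    obtain ⟨j, hjk, a, b, hcase⟩ := decompose hl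
    refine ⟨j, by omega, ?_⟩
    rcases hcase with ⟨hshape, ha, hb⟩ | ⟨hshape, ha, hje, hb⟩
    · left
      rw [Finset.mem_image]
      exact ⟨(a,b), Finset.mem_product.mpr ⟨ha, hb⟩, hshape.symm⟩
    · right
      rw [if_pos hje, Finset.mem_image]
      exact ⟨(a,b), Finset.mem_product.mpr ⟨ha, hb⟩, hshape.symm⟩
  · rintro ⟨j, hj, hmem | hmem⟩
    · rw [Finset.mem_image] at hmem
      obtain ⟨⟨a,b⟩, hab, rfl⟩ := hmem
      obtain ⟨ha, hb⟩ := Finset.mem_product.mp hab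
      have := memA ha hb
      have hjr : j + (k - j) + 1 = k + 1 := by omega
      rwa [hjr] at this
    · split_ifs at hmem with hje
      · rw [Finset.mem_image] at hmem
        obtain ⟨⟨a,b⟩, hab, rfl⟩ := hmem
        obtain ⟨ha, hb⟩ := Finset.mem_product.mp hab
        have := memB ha hb
        have h1 : j + (k - j) + 1 = k + 1 := by omega
        have h2 : j + 1 + (e - 1 - j) = e := by omega
        rwa [h1, h2] at this
      · simp at hmem

lemma card_step (k e : ℕ) :
    (T (k+1) e).card = ∑ j ∈ Finset.range (k+1),
      ((T j 0).card * (T (k-j) e).card +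
        if j + 1 ≤ e then (T j j).card * (T (k-j) (e-1-j)).card else 0) := by
  rw [decomp_eq k e]
  rw [Finset.card_biUnion]
  · apply Finset.sum_congr rfl
    intro j hj
    rw [Finset.card_union_of_disjoint]
    · congr 1
      · rw [Finset.card_image_of_injOn, Finset.card_product]
        rintro ⟨a,b⟩ hab ⟨a',b'⟩ hab' hfeq
        rw [Finset.mem_coe, Finset.mem_product] at hab hab'
        simp only [List.cons_append, List.cons.injEq, true_and] at hfeq
        have hla : a.length = a'.length := by
          rw [(mem_T.mp hab.1).1, (mem_T.mp hab'.1).1]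
        obtain ⟨h1, h2⟩ := List.append_inj hfeq hla
        simp only [List.cons.injEq, true_and] at h2
        simp [h1, h2]
      · split_ifs with hje
        · rw [Finset.card_image_of_injOn, Finset.card_product]
          rintro ⟨a,b⟩ hab ⟨a',b'⟩ hab' hfeq
          rw [Finset.mem_coe, Finset.mem_product] at hab hab'
          simp only [List.cons_append, List.cons.injEq, true_and] at hfeq
          have hla : a.length = a'.length := by
            rw [(mem_T.mp hab.1).1, (mem_T.mp hab'.1).1]
          obtain ⟨h1, h2⟩ := List.append_inj hfeq hla
          simp only [List.cons.injEq, true_and] at h2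
          simp [h1, h2]
        · simp
    · rw [Finset.disjoint_left]
      intro x hx hx'
      rw [Finset.mem_image] at hx
      obtain ⟨⟨a,b⟩, _, rfl⟩ := hx
      split_ifs at hx' with hje
      · rw [Finset.mem_image] at hx'
        obtain ⟨⟨a',b'⟩, _, hx'⟩ := hx'
        simp at hx'
      · simp at hx'
  · intro j hj j' hj' hne
    rw [Function.onFun, Finset.disjoint_left]
    intro x hx hx'
    rw [Finset.mem_union] at hx hx'
    rcases hx with hx | hx <;> rcases hx' with hx' | hx'
    · rw [Finset.mem_image] at hx hx'
      obtain ⟨⟨a,b⟩, hab, rfl⟩ := hx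
      obtain ⟨⟨a',b'⟩, hab', heq⟩ := hx'
      obtain ⟨ha, hb⟩ := Finset.mem_product.mp hab
      obtain ⟨ha', hb'⟩ := Finset.mem_product.mp hab'
      rcases Nat.lt_or_ge j j' with h | h
      · exact disjA h ha ha' hb hb' heq.symm
      · exact disjA (by omega : j' < j) ha' ha hb' hb heq
    · rw [Finset.mem_image] at hx
      obtain ⟨⟨a,b⟩, hab, rfl⟩ := hx
      split_ifs at hx' with hje
      · rw [Finset.mem_image] at hx'
        obtain ⟨⟨a',b'⟩, hab', heq⟩ := hx'
        simp at heq
      · simp at hx'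
    · split_ifs at hx with hje
      · rw [Finset.mem_image] at hx hx'
        obtain ⟨⟨a,b⟩, hab, heq⟩ := hx
        obtain ⟨⟨a',b'⟩, hab', rfl⟩ := hx'
        simp at heq
      · simp at hx
    · split_ifs at hx hx' with hje hje'
      · rw [Finset.mem_image] at hx hx'
        obtain ⟨⟨a,b⟩, hab, rfl⟩ := hx
        obtain ⟨⟨a',b'⟩, hab', heq⟩ := hx'
        obtain ⟨ha, hb⟩ := Finset.mem_product.mp hab
        obtain ⟨ha', hb'⟩ := Finset.mem_product.mp hab'
        rcases Nat.lt_or_ge j j' with h | h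
        · exact disjB h ha ha' hb hb' heq.symm
        · exact disjB (by omega : j' < j) ha' ha hb' hb heq
      · simp at hx'
      · simp at hx
      · simp at hx
lemma card_T (k : ℕ) : ∀ e, e ≤ k → (T k e).card = catalan k := by
  induction k using Nat.strong_induction_on with
  | _ k ih =>
    rcases k with _ | k
    · intro e he
      have he0 : e = 0 := by omega
      subst he0
      have hT : T 0 0 = {([] : List Bool)} := by
        ext l
        rw [mem_T, Finset.mem_singleton]
        constructor
        · rintro ⟨h1, _, _⟩
          exact List.eq_nil_of_length_eq_zero (by omega)
        · rintro rfl
          refine ⟨by simp, by simp, by simp [flaws]⟩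
      rw [hT, Finset.card_singleton, catalan_zero]
    · intro e he
      rw [card_step k e]
      have hterm : ∀ j ∈ Finset.range (k+1),
          (T j 0).card * (T (k-j) e).card +
            (if j + 1 ≤ e then (T j j).card * (T (k-j) (e-1-j)).card else 0)
          = (if e ≤ k - j then catalan j * catalan (k-j) else 0) +
            (if j + 1 ≤ e then catalan j * catalan (k-j) else 0) := by
        intro j hj
        rw [Finset.mem_range] at hj
        congr 1
        · split_ifs with h1
          · rw [ih j (by omega) 0 (by omega), ih (k-j) (by omega) e h1]
          · have hemp : T (k-j) e = ∅ := T_empty (by omega)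
            rw [hemp, Finset.card_empty, Nat.mul_zero]
        · split_ifs with h1
          · have hle : e - 1 - j ≤ k - j := by omega
            rw [ih j (by omega) j (le_refl j), ih (k-j) (by omega) (e-1-j) hle]
          · rfl
      rw [Finset.sum_congr rfl hterm, Finset.sum_add_distrib]
      have hrefl : ∑ j ∈ Finset.range (k+1), (if j + 1 ≤ e then catalan j * catalan (k-j) else 0)
          = ∑ j ∈ Finset.range (k+1), (if k - j + 1 ≤ e then catalan j * catalan (k-j) else 0) := by
        rw [← Finset.sum_range_reflect (fun j => if j + 1 ≤ e then catalan j * catalan (k-j) else 0) (k+1)]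
        apply Finset.sum_congr rfl
        intro j hj
        rw [Finset.mem_range] at hj
        have h1 : k + 1 - 1 - j = k - j := by omega
        have h2 : k - (k - j) = j := by omega
        rw [h1, h2, Nat.mul_comm]
      rw [hrefl, ← Finset.sum_add_distrib]
      have hfin : ∑ j ∈ Finset.range (k+1),
          ((if e ≤ k - j then catalan j * catalan (k-j) else 0) +
           (if k - j + 1 ≤ e then catalan j * catalan (k-j) else 0))
          = ∑ j ∈ Finset.range (k+1), catalan j * catalan (k-j) := by
        apply Finset.sum_congr rfl
        intro j hj
        split_ifs with h1 h2 h2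
        · omega
        · rw [Nat.add_zero]
        · rw [Nat.zero_add]
        · omega
      rw [hfin, catalan_succ k]
      exact (Fin.sum_univ_eq_sum_range (fun i => catalan i * catalan (k-i)) (k+1)).symm
end CF

/-- Chung-Feller theorem: for each `0 ≤ e ≤ k`, the number of bitstrings of length `2*k`
with exactly `k` ones and exactly `e` flaws is the Catalan number `C_k`. -/
theorem chung_feller (k e : ℕ) (he : e ≤ k) :
    {l : List Bool | l.length = 2 * k ∧ l.count true = k ∧ flaws l = e}.ncard =
      (2 * k).choose k / (k + 1) := by
  have hset : {l : List Bool | l.length = 2 * k ∧ l.count true = k ∧ flaws l = e}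
      = ↑(CF.T k e) := by
    ext l
    simp [CF.mem_T]
  rw [hset, Set.ncard_coe_finset, CF.card_T k e he, catalan_eq_centralBinom_div]
  rfl
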